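/- arXiv:1802.04870 — 2 statements merged into one kernel-verified Lean document; each statement's English description precedes it below -/
import Mathlib

section
/- If {v_0, ..., v_{k-1}} with k ≥ 2 forms a domination cycle in a finite simplicial graph Γ (that is, v_0 ≥ v_{k-1} ≥ ... ≥ v_1 ≥ v_0 under the domination relation), then Γ admits a nontrivial graph automorphism. -/
/-- `w` dominates `v` in `Γ`: lk(v) ⊆ st(w). -/
def Dominates {V : Type*} (Γ : SimpleGraph V) (w v : V) : Prop :=
  Γ.neighborSet v ⊆ Γ.neighborSet w ∪ {w}

lemma dominates_refl {V : Type*} (Γ : SimpleGraph V) (a : V) : Dominates Γ a a := by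
  intro x hx; exact Or.inl hx

lemma dominates_trans {V : Type*} (Γ : SimpleGraph V) {a b c : V}
    (hab : Dominates Γ a b) (hbc : Dominates Γ b c) : Dominates Γ a c := by
  intro x hx
  rcases hbc hx with hxb | hxb
  · exact hab hxb
  · simp only [Set.mem_singleton_iff] at hxb
    rw [hxb] at hx ⊢
    have hcb : Γ.Adj c b := hx
    have hc : c ∈ Γ.neighborSet a ∪ {a} := hab (by simpa using hcb.symm)
    rcases hc with hca | hca
    · have hac : Γ.Adj a c := hca
      have ha : a ∈ Γ.neighborSet b ∪ {b} := hbc (by simpa using hac.symm)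
      rcases ha with h | h
      · exact Or.inl ((show Γ.Adj b a from h).symm)
      · simp only [Set.mem_singleton_iff] at h
        rw [← h]; exact Or.inr rfl
    · simp only [Set.mem_singleton_iff] at hca
      refine Or.inl ?_
      rw [← hca]
      exact hcb

/-- Swapping a mutually dominating pair preserves adjacency (one direction). -/
lemma swap_adj {V : Type*} [DecidableEq V] (Γ : SimpleGraph V) {a b : V}
    (hab : Dominates Γ a b) (hba : Dominates Γ b a) {x y : V} (h : Γ.Adj x y) :
    Γ.Adj (Equiv.swap a b x) (Equiv.swap a b y) := by
  have key : ∀ z w : V, Γ.Adj z w → z ≠ a → z ≠ b → Γ.Adj z (Equiv.swap a b w) := by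
    intro z w hzw hza hzb
    by_cases hwa : w = a
    · rw [hwa, Equiv.swap_apply_left]
      rw [hwa] at hzw
      rcases hba (show z ∈ Γ.neighborSet a from hzw.symm) with h1 | h1
      · exact (show Γ.Adj b z from h1).symm
      · exact absurd (show z = b by simpa using h1) hzb
    by_cases hwb : w = b
    · rw [hwb, Equiv.swap_apply_right]
      rw [hwb] at hzw
      rcases hab (show z ∈ Γ.neighborSet b from hzw.symm) with h1 | h1
      · exact (show Γ.Adj a z from h1).symm
      · exact absurd (show z = a by simpa using h1) hza
    · rw [Equiv.swap_apply_of_ne_of_ne hwa hwb]; exact hzw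
  by_cases hxa : x = a
  · rw [hxa, Equiv.swap_apply_left]
    rw [hxa] at h
    by_cases hya : y = a
    · exact absurd hya h.ne'
    by_cases hyb : y = b
    · rw [hyb, Equiv.swap_apply_right]
      rw [hyb] at h; exact h.symm
    · rw [Equiv.swap_apply_of_ne_of_ne hya hyb]
      rcases hba (show y ∈ Γ.neighborSet a from h) with h1 | h1
      · exact (show Γ.Adj b y from h1)
      · exact absurd h1 hyb
  by_cases hxb : x = b
  · rw [hxb, Equiv.swap_apply_right]
    rw [hxb] at h
    by_cases hyb : y = b
    · exact absurd hyb h.ne'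
    by_cases hya : y = a
    · rw [hya, Equiv.swap_apply_left]
      rw [hya] at h; exact h.symm
    · rw [Equiv.swap_apply_of_ne_of_ne hya hyb]
      rcases hab (show y ∈ Γ.neighborSet b from h) with h1 | h1
      · exact (show Γ.Adj a y from h1)
      · exact absurd h1 hya
  · rw [Equiv.swap_apply_of_ne_of_ne hxa hxb]
    exact key x y h hxa hxb

open Fin.NatCast Fin.CommRing in
/-- a domination cycle of length k ≥ 2 yields a nontrivial graph automorphism. -/
theorem domination_cycle_gives_automorphism {V : Type*} [Fintype V]
    (Γ : SimpleGraph V) (k : ℕ) (hk : 2 ≤ k) (v : Fin k → V)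
    (hinj : Function.Injective v)
    (hcyc : ∀ i : Fin k, Dominates Γ (v (i + ⟨1, by omega⟩)) (v i)) :
    ∃ e : Γ ≃g Γ, e.toEquiv ≠ Equiv.refl V := by
  classical
  haveI : NeZero k := ⟨by omega⟩
  set one : Fin k := ⟨1, by omega⟩ with hone
  have hone1 : one = (1 : Fin k) := by
    apply Fin.ext
    simp [hone, Fin.val_one, Nat.mod_eq_of_lt (by omega : 1 < k)]
  -- chain domination: v (one + n) dominates v one
  have chain : ∀ n : ℕ, Dominates Γ (v (one + (n : Fin k))) (v one) := by
    intro n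
    induction n with
    | zero => simpa using dominates_refl Γ (v one)
    | succ m ih =>
        have hstep := hcyc (one + (m : Fin k))
        have : one + ((m + 1 : ℕ) : Fin k) = (one + (m : Fin k)) + one := by
          push_cast
          rw [hone1]; ring
        rw [this]
        exact dominates_trans Γ hstep ih
  have h01 : Dominates Γ (v 0) (v one) := by
    have hch := chain (k - 1)
    have heq : one + ((k - 1 : ℕ) : Fin k) = 0 := by
      have e1 : one = ((1 : ℕ) : Fin k) := by rw [hone1]; exact_mod_cast rfl
      rw [e1, ← Nat.cast_add]
      have : 1 + (k - 1) = k := by omega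
      rw [this, Fin.natCast_self]
    rwa [heq] at hch
  have h10 : Dominates Γ (v one) (v 0) := by
    have := hcyc 0
    simpa [hone] using this
  have hne : v 0 ≠ v one := by
    intro h
    have := hinj h
    have h0 : (0 : Fin k) ≠ one := by
      intro h'
      have := congrArg Fin.val h'
      simp [hone] at this
    exact h0 this
  refine ⟨⟨Equiv.swap (v 0) (v one), ?_⟩, ?_⟩
  · intro x y
    constructor
    · intro h
      have h2 := swap_adj Γ h01 h10 h
      rwa [Equiv.swap_apply_self, Equiv.swap_apply_self] at h2
    · intro h
      exact swap_adj Γ h01 h10 h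
  · intro h
    have := congrFun (congrArg (fun e => e.toFun) h) (v 0)
    simp [Equiv.swap_apply_left] at this
    exact hne this.symm
end

section
/- In the right-angled Artin group A(Γ) on a finite simplicial graph Γ, if vertex w dominates vertex v (lk(v) ⊆ st(w)), then the map sending v to vw and fixing all other vertex generators extends to an automorphism of A(Γ). -/
/-- Commutation relations of the right-angled Artin group on Γ. -/
def raagRels {V : Type*} (Γ : SimpleGraph V) : Set (FreeGroup V) :=
  {r | ∃ v w : V, Γ.Adj v w ∧
    r = FreeGroup.of v * FreeGroup.of w * (FreeGroup.of v)⁻¹ * (FreeGroup.of w)⁻¹}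

lemma raag_comm {V : Type*} (Γ : SimpleGraph V) {a b : V} (h : Γ.Adj a b) :
    Commute (PresentedGroup.of a : PresentedGroup (raagRels Γ)) (PresentedGroup.of b) := by
  rw [← commutatorElement_eq_one_iff_commute]
  have hm : (FreeGroup.of a * FreeGroup.of b * (FreeGroup.of a)⁻¹ * (FreeGroup.of b)⁻¹)
      ∈ Subgroup.normalClosure (raagRels Γ) :=
    Subgroup.subset_normalClosure ⟨a, b, h, rfl⟩
  have h1 : (QuotientGroup.mk (FreeGroup.of a * FreeGroup.of b * (FreeGroup.of a)⁻¹ *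
      (FreeGroup.of b)⁻¹) : PresentedGroup (raagRels Γ)) = 1 :=
    (QuotientGroup.eq_one_iff _).mpr hm
  rw [commutatorElement_def]
  exact h1

open Classical in
/-- a dominated transvection v ↦ vw extends to an automorphism of A(Γ). -/
theorem dominated_transvection_automorphism {V : Type*} [Fintype V] (Γ : SimpleGraph V)
    (v w : V) (hvw : v ≠ w)
    (hdom : Γ.neighborSet v ⊆ Γ.neighborSet w ∪ {w}) :
    ∃ e : MulAut (PresentedGroup (raagRels Γ)),
      e (PresentedGroup.of v) = PresentedGroup.of v * PresentedGroup.of w ∧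
      ∀ u : V, u ≠ v → e (PresentedGroup.of u) = PresentedGroup.of u := by
  classical
  set G := PresentedGroup (raagRels Γ)
  set f : V → G := fun u => if u = v then PresentedGroup.of v * PresentedGroup.of w
    else PresentedGroup.of u with hf
  set g : V → G := fun u => if u = v then PresentedGroup.of v * (PresentedGroup.of w)⁻¹
    else PresentedGroup.of u with hg
  have hmainf : ∀ b, Γ.Adj v b → Commute (PresentedGroup.of v * PresentedGroup.of w)
      (PresentedGroup.of b : G) := by
    intro b hb
    rcases hdom hb with hwb | hbw
    · exact (raag_comm Γ hb).mul_left (raag_comm Γ hwb)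
    · have hbw' : b = w := hbw
      rw [hbw'] at hb ⊢
      exact (raag_comm Γ hb).mul_left (Commute.refl _)
  have hmaing : ∀ b, Γ.Adj v b → Commute (PresentedGroup.of v * (PresentedGroup.of w)⁻¹)
      (PresentedGroup.of b : G) := by
    intro b hb
    rcases hdom hb with hwb | hbw
    · exact (raag_comm Γ hb).mul_left (raag_comm Γ hwb).inv_left
    · have hbw' : b = w := hbw
      rw [hbw'] at hb ⊢
      exact (raag_comm Γ hb).mul_left (Commute.refl _).inv_left
  have key : ∀ a b : V, Γ.Adj a b → Commute (f a) (f b) := by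
    intro a b hab
    by_cases ha : a = v
    · have hb : b ≠ v := by rw [ha] at hab; exact hab.ne'
      have e1 : f a = PresentedGroup.of v * PresentedGroup.of w := by simp [hf, ha]
      have e2 : f b = PresentedGroup.of b := by simp [hf, hb]
      rw [e1, e2]; exact hmainf b (ha ▸ hab)
    · by_cases hb : b = v
      · have e1 : f b = PresentedGroup.of v * PresentedGroup.of w := by simp [hf, hb]
        have e2 : f a = PresentedGroup.of a := by simp [hf, ha]
        rw [e1, e2]; exact (hmainf a (hb ▸ hab.symm)).symm
      · have e1 : f a = PresentedGroup.of a := by simp [hf, ha]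
        have e2 : f b = PresentedGroup.of b := by simp [hf, hb]
        rw [e1, e2]; exact raag_comm Γ hab
  have keyg : ∀ a b : V, Γ.Adj a b → Commute (g a) (g b) := by
    intro a b hab
    by_cases ha : a = v
    · have hb : b ≠ v := by rw [ha] at hab; exact hab.ne'
      have e1 : g a = PresentedGroup.of v * (PresentedGroup.of w)⁻¹ := by simp [hg, ha]
      have e2 : g b = PresentedGroup.of b := by simp [hg, hb]
      rw [e1, e2]; exact hmaing b (ha ▸ hab)
    · by_cases hb : b = v
      · have e1 : g b = PresentedGroup.of v * (PresentedGroup.of w)⁻¹ := by simp [hg, hb]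
        have e2 : g a = PresentedGroup.of a := by simp [hg, ha]
        rw [e1, e2]; exact (hmaing a (hb ▸ hab.symm)).symm
      · have e1 : g a = PresentedGroup.of a := by simp [hg, ha]
        have e2 : g b = PresentedGroup.of b := by simp [hg, hb]
        rw [e1, e2]; exact raag_comm Γ hab
  have hfrel : ∀ r ∈ raagRels Γ, FreeGroup.lift f r = 1 := by
    rintro r ⟨a, b, hab, rfl⟩
    simp only [map_mul, map_inv, FreeGroup.lift_apply_of]
    have := (key a b hab)
    rw [← commutatorElement_eq_one_iff_commute] at this
    simpa [commutatorElement_def] using this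
  have hgrel : ∀ r ∈ raagRels Γ, FreeGroup.lift g r = 1 := by
    rintro r ⟨a, b, hab, rfl⟩
    simp only [map_mul, map_inv, FreeGroup.lift_apply_of]
    have := (keyg a b hab)
    rw [← commutatorElement_eq_one_iff_commute] at this
    simpa [commutatorElement_def] using this
  let F : G →* G := PresentedGroup.toGroup hfrel
  let Gm : G →* G := PresentedGroup.toGroup hgrel
  have hFof : ∀ u, F (PresentedGroup.of u) = f u := fun u => PresentedGroup.toGroup.of hfrel
  have hGof : ∀ u, Gm (PresentedGroup.of u) = g u := fun u => PresentedGroup.toGroup.of hgrel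
  have hGF : Gm.comp F = MonoidHom.id G := by
    apply PresentedGroup.ext
    intro u
    by_cases hu : u = v
    · subst hu
      simp [MonoidHom.comp_apply, hFof, hf, hGof, hg, hvw.symm, mul_assoc]
      rfl
    · simp [MonoidHom.comp_apply, hFof, hGof, hf, hg, hu]
      rfl
  have hFG : F.comp Gm = MonoidHom.id G := by
    apply PresentedGroup.ext
    intro u
    by_cases hu : u = v
    · subst hu
      simp [MonoidHom.comp_apply, hFof, hf, hGof, hg, hvw.symm, mul_assoc]
      rfl
    · simp [MonoidHom.comp_apply, hFof, hGof, hf, hg, hu]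
      rfl
  refine ⟨MonoidHom.toMulEquiv F Gm hGF hFG, ?_, ?_⟩
  · simpa [hf] using hFof v
  · intro u hu
    simpa [hf, hu] using hFof u
end
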